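/- arXiv:1304.2220 — 3 statements merged into one kernel-verified Lean document; each statement's English description precedes it below -/
import Mathlib

section
/- Let F : ℝ² → ℝ² be a C² diffeomorphism given in null coordinates by F(u,v) = (σ(u,v), τ(u,v)). Suppose that for every monomial θ ∈ {σ, τ, σ², τ²} (as functions of (u,v)), ∂²θ/∂v∂u = 0. Then there exist continuous functions f, h : ℝ → ℝ and C¹ functions g, j : ℝ → ℝ with σ(u,v) = ∫₀ᵘ f(s) ds + g(v), τ(u,v) = ∫₀ᵘ h(s) ds + j(v), together with f(u)·g'(v) = 0 and h(u)·j'(v) = 0 for all u, v. -/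
/-- Partial derivative in the first variable. -/
noncomputable def pd1 (f : ℝ × ℝ → ℝ) (p : ℝ × ℝ) : ℝ := deriv (fun x => f (x, p.2)) p.1

/-- Partial derivative in the second variable. -/
noncomputable def pd2 (f : ℝ × ℝ → ℝ) (p : ℝ × ℝ) : ℝ := deriv (fun y => f (p.1, y)) p.2

lemma split_aux (σ : ℝ × ℝ → ℝ) (hσ : ContDiff ℝ 2 σ)
    (h1 : ∀ p : ℝ × ℝ, pd2 (pd1 σ) p = 0)
    (h3 : ∀ p : ℝ × ℝ, pd2 (pd1 (fun q => σ q ^ 2)) p = 0) :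
    ∃ f g : ℝ → ℝ, Continuous f ∧ ContDiff ℝ 1 g ∧
      (∀ u v : ℝ, σ (u, v) = (∫ s in (0:ℝ)..u, f s) + g v) ∧
      (∀ u v : ℝ, f u * deriv g v = 0) := by
  set A : ℝ × ℝ → ℝ := fun p => fderiv ℝ σ p ((1:ℝ), (0:ℝ)) with hAdef
  have hdσ : Differentiable ℝ σ := hσ.differentiable (by norm_num)
  have hslice1 : ∀ (y u : ℝ), HasDerivAt (fun x => σ (x, y)) (A (u, y)) u := by
    intro y u
    have hc : HasDerivAt (fun x : ℝ => (x, y)) ((1:ℝ), (0:ℝ)) u :=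
      (hasDerivAt_id u).prodMk (hasDerivAt_const u y)
    exact (hdσ (u, y)).hasFDerivAt.comp_hasDerivAt u hc
  have hslice2 : ∀ (u v : ℝ), HasDerivAt (fun y => σ (u, y)) (fderiv ℝ σ (u, v) ((0:ℝ), (1:ℝ))) v := by
    intro u v
    have hc : HasDerivAt (fun y : ℝ => (u, y)) ((0:ℝ), (1:ℝ)) v :=
      (hasDerivAt_const v u).prodMk (hasDerivAt_id v)
    exact (hdσ (u, v)).hasFDerivAt.comp_hasDerivAt v hc
  have hpd1 : ∀ p : ℝ × ℝ, pd1 σ p = A p := fun p => (hslice1 p.2 p.1).deriv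
  have hA : ContDiff ℝ 1 A :=
    (ContinuousLinearMap.apply ℝ ℝ ((1:ℝ), (0:ℝ))).contDiff.comp (hσ.fderiv_right le_rfl)
  have hAconst : ∀ u v : ℝ, A (u, v) = A (u, 0) := by
    intro u v
    have hdiff : Differentiable ℝ (fun y => A (u, y)) :=
      (hA.differentiable one_ne_zero).comp ((differentiable_const u).prodMk differentiable_id)
    have hz : ∀ y : ℝ, deriv (fun y' => A (u, y')) y = 0 := by
      intro y
      have h := h1 (u, y)
      simp only [pd2] at h
      have heq : (fun y' => pd1 σ (((u, y) : ℝ × ℝ).1, y')) = fun y' => A (u, y') :=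
        funext fun y' => hpd1 (u, y')
      rw [heq] at h
      exact h
    exact is_const_of_deriv_eq_zero hdiff hz v 0
  set f : ℝ → ℝ := fun u => A (u, 0) with hfdef
  have hf : Continuous f := hA.continuous.comp (continuous_id.prodMk continuous_const)
  set g : ℝ → ℝ := fun v => σ (0, v) with hgdef
  have hg : ContDiff ℝ 1 g :=
    (hσ.of_le (by norm_num)).comp (contDiff_const.prodMk contDiff_id)
  have hint : ∀ u v : ℝ, ∫ s in (0:ℝ)..u, f s = σ (u, v) - σ (0, v) := by
    intro u v
    apply intervalIntegral.integral_eq_sub_of_hasDerivAt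
    · intro t _
      have h := hslice1 v t
      rwa [hAconst t v] at h
    · exact hf.intervalIntegrable 0 u
  have hrepr : ∀ u v : ℝ, σ (u, v) = (∫ s in (0:ℝ)..u, f s) + g v := by
    intro u v
    have := hint u v
    simp only [hgdef]
    linarith
  have hBg : ∀ u v : ℝ, fderiv ℝ σ (u, v) ((0:ℝ), (1:ℝ)) = deriv g v := by
    intro u v
    have h := hslice2 u v
    have heq : (fun y => σ (u, y)) = fun y => (∫ s in (0:ℝ)..u, f s) + g y :=
      funext fun y => hrepr u y
    rw [heq] at h
    have := h.deriv
    rw [deriv_const_add] at this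
    exact this.symm
  refine ⟨f, g, hf, hg, hrepr, ?_⟩
  intro u v
  have hsq : ∀ y : ℝ, pd1 (fun q => σ q ^ 2) (u, y) = 2 * σ (u, y) * f u := by
    intro y
    have h := ((hslice1 y u).fun_pow 2).deriv
    simp only [pd1]
    rw [h]
    have : A (u, y) = f u := hAconst u y
    rw [this]
    ring
  have h := h3 (u, v)
  simp only [pd2] at h
  have heq : (fun y => pd1 (fun q => σ q ^ 2) (((u, v) : ℝ × ℝ).1, y))
      = fun y => 2 * σ (u, y) * f u := funext fun y => hsq y
  rw [heq] at h
  have hd2 : HasDerivAt (fun y => 2 * σ (u, y) * f u) (2 * deriv g v * f u) v := by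
    have h2 := hslice2 u v
    rw [hBg u v] at h2
    exact (h2.const_mul 2).mul_const (f u)
  rw [hd2.deriv] at h
  linarith


/-- If all mixed partials ∂²θ/∂v∂u vanish for θ ∈ {σ, τ, σ², τ²}, where
(σ,τ) is a C² diffeomorphism of the plane, then σ and τ split as
`∫₀ᵘ f + g(v)` and `∫₀ᵘ h + j(v)` with `f·g' ≡ 0` and `h·j' ≡ 0`. -/
theorem split_form_of_monomial_mixed_partials_zero
    (σ τ : ℝ × ℝ → ℝ)
    (hσ : ContDiff ℝ 2 σ) (hτ : ContDiff ℝ 2 τ)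
    (hFb : Function.Bijective (fun p : ℝ × ℝ => (σ p, τ p)))
    (hFinv : ∃ G : ℝ × ℝ → ℝ × ℝ, ContDiff ℝ 2 G ∧
      Function.LeftInverse G (fun p : ℝ × ℝ => (σ p, τ p)) ∧
      Function.RightInverse G (fun p : ℝ × ℝ => (σ p, τ p)))
    (h1 : ∀ p : ℝ × ℝ, pd2 (pd1 σ) p = 0)
    (h2 : ∀ p : ℝ × ℝ, pd2 (pd1 τ) p = 0)
    (h3 : ∀ p : ℝ × ℝ, pd2 (pd1 (fun q => σ q ^ 2)) p = 0)
    (h4 : ∀ p : ℝ × ℝ, pd2 (pd1 (fun q => τ q ^ 2)) p = 0) :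
    ∃ f h : ℝ → ℝ, ∃ g j : ℝ → ℝ,
      Continuous f ∧ Continuous h ∧ ContDiff ℝ 1 g ∧ ContDiff ℝ 1 j ∧
      (∀ u v : ℝ, σ (u, v) = (∫ s in (0:ℝ)..u, f s) + g v) ∧
      (∀ u v : ℝ, τ (u, v) = (∫ s in (0:ℝ)..u, h s) + j v) ∧
      (∀ u v : ℝ, f u * deriv g v = 0) ∧
      (∀ u v : ℝ, h u * deriv j v = 0) := by
  obtain ⟨f, g, hf, hg, hr1, hp1⟩ := split_aux σ hσ h1 h3
  obtain ⟨h, j, hh, hj, hr2, hp2⟩ := split_aux τ hτ h2 h4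
  exact ⟨f, h, g, j, hf, hh, hg, hj, hr1, hr2, hp1, hp2⟩
end

section
/- Let F(u,v) = (σ(u,v), τ(u,v)) be a C² map of ℝ² such that for every C² function θ : ℝ² → ℝ with θ_στ ≡ 0 one has (θ∘F)_{uv} ≡ 0. Then σ_{uv} ≡ 0, τ_{uv} ≡ 0, σ_u σ_v ≡ 0, and τ_u τ_v ≡ 0. -/
lemma diffX (f : ℝ × ℝ → ℝ) (hf : Differentiable ℝ f) (y : ℝ) :
    Differentiable ℝ (fun x => f (x, y)) :=
  hf.comp (differentiable_id.prodMk (differentiable_const y))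

lemma diffY (f : ℝ × ℝ → ℝ) (hf : Differentiable ℝ f) (x : ℝ) :
    Differentiable ℝ (fun y => f (x, y)) :=
  hf.comp ((differentiable_const x).prodMk differentiable_id)

lemma pd1_eq (f : ℝ × ℝ → ℝ) (hf : Differentiable ℝ f) (p : ℝ × ℝ) :
    pd1 f p = fderiv ℝ f p ((1 : ℝ), (0 : ℝ)) := by
  have h1 : HasDerivAt (fun x : ℝ => (x, p.2)) ((1 : ℝ), (0 : ℝ)) p.1 :=
    (hasDerivAt_id p.1).prodMk (hasDerivAt_const p.1 p.2)
  have h2 := ((hf (p.1, p.2)).hasFDerivAt).comp_hasDerivAt p.1 h1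
  have : HasDerivAt (fun x => f (x, p.2)) (fderiv ℝ f p ((1 : ℝ), (0 : ℝ))) p.1 := by
    exact h2
  exact this.deriv

lemma contDiff_pd1 (f : ℝ × ℝ → ℝ) (hf : ContDiff ℝ 2 f) :
    ContDiff ℝ 1 (pd1 f) := by
  have h : pd1 f = fun p => fderiv ℝ f p ((1 : ℝ), (0 : ℝ)) :=
    funext fun p => pd1_eq f (hf.differentiable (by norm_num)) p
  rw [h]
  exact (hf.fderiv_right (by norm_num)).clm_apply contDiff_const

lemma pd1_mul (f g : ℝ × ℝ → ℝ) (hf : Differentiable ℝ f) (hg : Differentiable ℝ g)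
    (p : ℝ × ℝ) :
    pd1 (fun q => f q * g q) p = pd1 f p * g p + f p * pd1 g p := by
  unfold pd1
  exact deriv_mul ((diffX f hf p.2) p.1) ((diffX g hg p.2) p.1)

lemma pd2_add (f g : ℝ × ℝ → ℝ) (hf : Differentiable ℝ f) (hg : Differentiable ℝ g)
    (p : ℝ × ℝ) :
    pd2 (fun q => f q + g q) p = pd2 f p + pd2 g p := by
  unfold pd2
  exact deriv_add ((diffY f hf p.1) p.2) ((diffY g hg p.1) p.2)

lemma pd2_mul (f g : ℝ × ℝ → ℝ) (hf : Differentiable ℝ f) (hg : Differentiable ℝ g)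
    (p : ℝ × ℝ) :
    pd2 (fun q => f q * g q) p = pd2 f p * g p + f p * pd2 g p := by
  unfold pd2
  exact deriv_mul ((diffY f hf p.1) p.2) ((diffY g hg p.1) p.2)

lemma key (g : ℝ × ℝ → ℝ) (hg : ContDiff ℝ 2 g)
    (h1 : ∀ p, pd2 (pd1 g) p = 0)
    (h2 : ∀ p, pd2 (pd1 (fun q => g q * g q)) p = 0) :
    ∀ p, pd1 g p * pd2 g p = 0 := by
  intro p
  have Dg : Differentiable ℝ g := hg.differentiable (by norm_num)
  have Dpg : Differentiable ℝ (pd1 g) := (contDiff_pd1 g hg).differentiable one_ne_zero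
  have e1 : pd1 (fun q => g q * g q) = fun q => pd1 g q * g q + g q * pd1 g q :=
    funext fun q => pd1_mul g g Dg Dg q
  have h2p := h2 p
  rw [e1] at h2p
  rw [pd2_add (fun q => pd1 g q * g q) (fun q => g q * pd1 g q) (Dpg.mul Dg) (Dg.mul Dpg) p,
      pd2_mul _ _ Dpg Dg p, pd2_mul _ _ Dg Dpg p, h1 p] at h2p
  nlinarith [h2p]

/-- If θ∘F has vanishing mixed partial whenever θ does, then the components
of F have vanishing mixed partials and `σ_u σ_v ≡ 0`, `τ_u τ_v ≡ 0`. -/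
theorem components_conditions_of_wave_invariance
    (σ τ : ℝ × ℝ → ℝ) (hσ : ContDiff ℝ 2 σ) (hτ : ContDiff ℝ 2 τ)
    (F : ℝ × ℝ → ℝ × ℝ) (hF : ∀ p, F p = (σ p, τ p))
    (hinv : ∀ θ : ℝ × ℝ → ℝ, ContDiff ℝ 2 θ →
      (∀ p : ℝ × ℝ, pd2 (pd1 θ) p = 0) →
      (∀ p : ℝ × ℝ, pd2 (pd1 (θ ∘ F)) p = 0)) :
    (∀ p : ℝ × ℝ, pd2 (pd1 σ) p = 0) ∧
    (∀ p : ℝ × ℝ, pd2 (pd1 τ) p = 0) ∧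
    (∀ p : ℝ × ℝ, pd1 σ p * pd2 σ p = 0) ∧
    (∀ p : ℝ × ℝ, pd1 τ p * pd2 τ p = 0) := by
  -- θ = fst
  have hσmix : ∀ p : ℝ × ℝ, pd2 (pd1 σ) p = 0 := by
    have h := hinv (fun q => q.1) contDiff_fst (by intro p; simp [pd1, pd2])
    have e : (fun q : ℝ × ℝ => q.1) ∘ F = σ := funext fun q => by simp [hF]
    rw [e] at h; exact h
  have hτmix : ∀ p : ℝ × ℝ, pd2 (pd1 τ) p = 0 := by
    have h := hinv (fun q => q.2) contDiff_snd (by intro p; simp [pd1, pd2])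
    have e : (fun q : ℝ × ℝ => q.2) ∘ F = τ := funext fun q => by simp [hF]
    rw [e] at h; exact h
  have hσsq : ∀ p : ℝ × ℝ, pd2 (pd1 (fun q => σ q * σ q)) p = 0 := by
    have h := hinv (fun q => q.1 * q.1) (contDiff_fst.mul contDiff_fst) (by
      intro p
      show deriv (fun _ : ℝ => deriv (fun x : ℝ => x * x) p.1) p.2 = 0
      simp)
    have e : (fun q : ℝ × ℝ => q.1 * q.1) ∘ F = fun q => σ q * σ q :=
      funext fun q => by simp [hF]
    rw [e] at h; exact h
  have hτsq : ∀ p : ℝ × ℝ, pd2 (pd1 (fun q => τ q * τ q)) p = 0 := by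
    have h := hinv (fun q => q.2 * q.2) (contDiff_snd.mul contDiff_snd) (by
      intro p
      show deriv (fun y : ℝ => deriv (fun _ : ℝ => y * y) p.1) p.2 = 0
      simp)
    have e : (fun q : ℝ × ℝ => q.2 * q.2) ∘ F = fun q => τ q * τ q :=
      funext fun q => by simp [hF]
    rw [e] at h; exact h
  exact ⟨hσmix, hτmix, key σ hσ hσmix hσsq, key τ hτ hτmix hτsq⟩
end

section
/- Let F : ℝ² → ℝ² be a C² diffeomorphism given in null coordinates by (σ,τ) = F(u,v). Suppose: (a) for every C² function θ, θ has vanishing mixed partial ∂²θ/∂σ∂τ if and only if ∂²(θ∘F)/∂u∂v = 0; (b) σ_u τ_v + σ_v τ_u ≥ 0 everywhere; (c) ∂(σ - τ)/∂t ≥ 0 everywhere, where ∂/∂t = ∂/∂u - ∂/∂v. Then F is a causal automorphism of two-dimensional Minkowski spacetime: there exist homeomorphisms φ, ψ of ℝ, both strictly increasing or both strictly decreasing, such that F(u,v) = (φ(u), ψ(v)) in the increasing case or F(u,v) = (φ(v), ψ(u)) in the decreasing case. -/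
/-- The causal relation on ℝ² in null coordinates. -/
def causal (p q : ℝ × ℝ) : Prop := p.1 ≤ q.1 ∧ q.2 ≤ p.2

open Filter Topology Set Function

section Aux

lemma aux_antitone_deriv_nonpos {f : ℝ → ℝ} (hf : Antitone f)
    (hd : Differentiable ℝ f) (x : ℝ) : deriv f x ≤ 0 := by
  have h : Tendsto (slope f x) (𝓝[>] x) (𝓝 (deriv f x)) :=
    ((hasDerivAt_iff_tendsto_slope).1 (hd x).hasDerivAt).mono_left
      (nhdsWithin_mono x fun y hy => hy.ne')
  refine le_of_tendsto h ?_
  filter_upwards [self_mem_nhdsWithin] with y hy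
  rw [slope_def_field]
  exact div_nonpos_iff.mpr (Or.inr ⟨sub_nonpos.2 (hf hy.le), sub_nonneg.2 hy.le⟩)

lemma aux_monotone_deriv_nonneg {f : ℝ → ℝ} (hf : Monotone f)
    (hd : Differentiable ℝ f) (x : ℝ) : 0 ≤ deriv f x := by
  have h : Tendsto (slope f x) (𝓝[>] x) (𝓝 (deriv f x)) :=
    ((hasDerivAt_iff_tendsto_slope).1 (hd x).hasDerivAt).mono_left
      (nhdsWithin_mono x fun y hy => hy.ne')
  refine ge_of_tendsto h ?_
  filter_upwards [self_mem_nhdsWithin] with y hy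
  rw [slope_def_field]
  exact div_nonneg (sub_nonneg.2 (hf hy.le)) (sub_nonneg.2 hy.le)

lemma aux_hasDerivAt_slice1 {f : ℝ × ℝ → ℝ} (hf : Differentiable ℝ f) (a b : ℝ) :
    HasDerivAt (fun x => f (x, b)) (fderiv ℝ f (a, b) (1, 0)) a := by
  have h1 : HasDerivAt (fun x : ℝ => (x, b)) ((1 : ℝ), (0 : ℝ)) a :=
    (hasDerivAt_id a).prodMk (hasDerivAt_const a b)
  exact (hf (a, b)).hasFDerivAt.comp_hasDerivAt a h1

lemma aux_contDiff_pd1 {f : ℝ × ℝ → ℝ} (hf : ContDiff ℝ 2 f) : ContDiff ℝ 1 (pd1 f) := by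
  have hd : Differentiable ℝ f := hf.differentiable (by norm_num)
  have e : pd1 f = fun p : ℝ × ℝ => fderiv ℝ f p (1, 0) := by
    funext p
    exact (aux_hasDerivAt_slice1 hd p.1 p.2).deriv
  rw [e]
  exact (hf.fderiv_right (by norm_num)).clm_apply contDiff_const

lemma aux_separation {f : ℝ × ℝ → ℝ} (hf : ContDiff ℝ 2 f)
    (hmix : ∀ p, pd2 (pd1 f) p = 0) (u v : ℝ) :
    f (u, v) = f (u, 0) + f (0, v) - f (0, 0) := by
  have hd : Differentiable ℝ f := hf.differentiable (by norm_num)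
  have hd1 : Differentiable ℝ (pd1 f) := (aux_contDiff_pd1 hf).differentiable (by norm_num)
  have key : ∀ a y, pd1 f (a, y) = pd1 f (a, 0) := by
    intro a y
    have hdy : Differentiable ℝ (fun y => pd1 f (a, y)) :=
      hd1.comp ((differentiable_const a).prodMk differentiable_id)
    exact is_const_of_deriv_eq_zero hdy (fun t => hmix (a, t)) y 0
  have hdiff : Differentiable ℝ fun x => f (x, v) - f (x, 0) :=
    (hd.comp (differentiable_id.prodMk (differentiable_const v))).sub
      (hd.comp (differentiable_id.prodMk (differentiable_const 0)))
  have hz : ∀ x, deriv (fun x => f (x, v) - f (x, 0)) x = 0 := by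
    intro x
    rw [deriv_fun_sub (aux_hasDerivAt_slice1 hd x v).differentiableAt
      (aux_hasDerivAt_slice1 hd x 0).differentiableAt]
    have : pd1 f (x, v) - pd1 f (x, 0) = 0 := by rw [key x v, sub_self]
    exact this
  have := is_const_of_deriv_eq_zero hdiff hz u 0
  linarith [this]

lemma aux_pd1_sep {f : ℝ × ℝ → ℝ}
    (hsep : ∀ u v, f (u, v) = f (u, 0) + f (0, v) - f (0, 0)) (u v : ℝ) :
    pd1 f (u, v) = deriv (fun u => f (u, 0)) u := by
  have e : (fun x => f (x, v)) = fun x => f (x, 0) + (f (0, v) - f (0, 0)) := by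
    funext x; rw [hsep x v]; ring
  show deriv (fun x => f (x, v)) u = _
  rw [e, deriv_add_const]

lemma aux_pd2_sep {f : ℝ × ℝ → ℝ}
    (hsep : ∀ u v, f (u, v) = f (u, 0) + f (0, v) - f (0, 0)) (u v : ℝ) :
    pd2 f (u, v) = deriv (fun v => f (0, v)) v := by
  have e : (fun y => f (u, y)) = fun y => (f (u, 0) - f (0, 0)) + f (0, y) := by
    funext y; rw [hsep u y]; ring
  show deriv (fun y => f (u, y)) v = _
  rw [e, deriv_const_add]

lemma aux_mix_sq {f : ℝ × ℝ → ℝ} (hA : Differentiable ℝ (fun u => f (u, 0)))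
    (hB : Differentiable ℝ (fun v => f (0, v)))
    (hsep : ∀ u v, f (u, v) = f (u, 0) + f (0, v) - f (0, 0))
    (hmixsq : ∀ p, pd2 (pd1 (fun p => f p ^ 2)) p = 0) (u v : ℝ) :
    deriv (fun u => f (u, 0)) u * deriv (fun v => f (0, v)) v = 0 := by
  set A : ℝ → ℝ := fun u => f (u, 0) with hAdef
  set B : ℝ → ℝ := fun v => f (0, v) with hBdef
  have pd1sq : ∀ (x y : ℝ), pd1 (fun p => f p ^ 2) (x, y) =
      2 * (A x + (B y - B 0)) * deriv A x := by
    intro x y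
    have hde : HasDerivAt (fun t => (A t + (B y - B 0)) ^ 2)
        ((2 : ℕ) * (A x + (B y - B 0)) ^ (2 - 1) * deriv A x) x :=
      (((hA x).hasDerivAt).add_const _).pow 2
    have e : (fun t => f (t, y) ^ 2) = fun t => (A t + (B y - B 0)) ^ 2 := by
      funext t; rw [hsep t y]; simp only [hAdef, hBdef]; ring
    show deriv (fun t => f (t, y) ^ 2) x = _
    rw [e, hde.deriv]
    norm_num
  have h0 := hmixsq (u, v)
  have e2 : (fun y => pd1 (fun p => f p ^ 2) (u, y)) =
      fun y => 2 * (A u + (B y - B 0)) * deriv A u := funext fun y => pd1sq u y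
  have hde2 : HasDerivAt (fun y => 2 * (A u + (B y - B 0)) * deriv A u)
      (2 * deriv B v * deriv A u) v := by
    have h1 : HasDerivAt (fun y => A u + (B y - B 0)) (deriv B v) v :=
      (((hB v).hasDerivAt).sub_const (B 0)).const_add (A u)
    exact (h1.const_mul 2).mul_const (deriv A u)
  have hkey : deriv (fun y => pd1 (fun p => f p ^ 2) (u, y)) v = 0 := h0
  rw [e2, hde2.deriv] at hkey
  linear_combination hkey / 2

lemma aux_mix_fst : ∀ p : ℝ × ℝ, pd2 (pd1 (fun q : ℝ × ℝ => q.1)) p = 0 := by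
  intro p
  have e : pd1 (fun q : ℝ × ℝ => q.1) = fun _ => (1 : ℝ) := by
    funext q
    show deriv (fun x : ℝ => x) q.1 = 1
    simp
  rw [e]
  show deriv (fun _ : ℝ => (1 : ℝ)) p.2 = 0
  simp

lemma aux_mix_snd : ∀ p : ℝ × ℝ, pd2 (pd1 (fun q : ℝ × ℝ => q.2)) p = 0 := by
  intro p
  have e : pd1 (fun q : ℝ × ℝ => q.2) = fun _ => (0 : ℝ) := by
    funext q
    show deriv (fun _ : ℝ => q.2) q.1 = 0
    simp
  rw [e]
  show deriv (fun _ : ℝ => (0 : ℝ)) p.2 = 0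
  simp

lemma aux_mix_fst_sq : ∀ p : ℝ × ℝ, pd2 (pd1 (fun q : ℝ × ℝ => q.1 ^ 2)) p = 0 := by
  intro p
  have e : pd1 (fun q : ℝ × ℝ => q.1 ^ 2) = fun q => 2 * q.1 := by
    funext q
    show deriv (fun x : ℝ => x ^ 2) q.1 = 2 * q.1
    simp [mul_comm]
  rw [e]
  show deriv (fun _ : ℝ => 2 * p.1) p.2 = 0
  simp

lemma aux_mix_snd_sq : ∀ p : ℝ × ℝ, pd2 (pd1 (fun q : ℝ × ℝ => q.2 ^ 2)) p = 0 := by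
  intro p
  have e : pd1 (fun q : ℝ × ℝ => q.2 ^ 2) = fun _ => (0 : ℝ) := by
    funext q
    show deriv (fun _ : ℝ => q.2 ^ 2) q.1 = 0
    simp
  rw [e]
  show deriv (fun _ : ℝ => (0 : ℝ)) p.2 = 0
  simp

lemma aux_prod_cases {f g : ℝ → ℝ} (h : ∀ u v, f u * g v = 0) :
    (∀ u, f u = 0) ∨ (∀ v, g v = 0) := by
  by_cases hf : ∀ u, f u = 0
  · exact Or.inl hf
  · push_neg at hf
    obtain ⟨u0, h0⟩ := hf
    exact Or.inr fun v => (mul_eq_zero.1 (h u0 v)).resolve_left h0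

lemma aux_const_contra {f : ℝ → ℝ} (hd : Differentiable ℝ f)
    (hz : ∀ x, deriv f x = 0) (hinj : Function.Injective f) : False := by
  have := is_const_of_deriv_eq_zero hd hz 0 1
  exact zero_ne_one (hinj this)

lemma aux_mono_homeo {f : ℝ → ℝ} (hm : StrictMono f) (hs : Function.Surjective f) :
    ∃ e : ℝ ≃ₜ ℝ, ⇑e = f :=
  ⟨(StrictMono.orderIsoOfSurjective f hm hs).toHomeomorph, rfl⟩

lemma aux_anti_homeo {f : ℝ → ℝ} (ha : StrictAnti f) (hs : Function.Surjective f) :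
    ∃ e : ℝ ≃ₜ ℝ, ⇑e = f := by
  have hm : StrictMono (fun x => f (-x)) := fun a b hab => ha (neg_lt_neg hab)
  have hms : Function.Surjective (fun x => f (-x)) := by
    intro y
    obtain ⟨v, hv⟩ := hs y
    exact ⟨-v, by simpa using hv⟩
  refine ⟨(Homeomorph.neg ℝ).trans (StrictMono.orderIsoOfSurjective _ hm hms).toHomeomorph, ?_⟩
  funext x
  simp [Homeomorph.trans_apply]

end Aux

/-- Main theorem: a C² diffeomorphism of ℝ² preserving the wave equation,
with `σ_u τ_v + σ_v τ_u ≥ 0` and `∂(σ-τ)/∂t ≥ 0`, is a causal automorphism: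
it has the form `(φ(u), ψ(v))` with φ, ψ increasing homeomorphisms, or
`(φ(v), ψ(u))` with φ, ψ decreasing homeomorphisms. -/
theorem causal_automorphism_of_wave_invariance
    (σ τ : ℝ × ℝ → ℝ) (hσ : ContDiff ℝ 2 σ) (hτ : ContDiff ℝ 2 τ)
    (F : ℝ × ℝ → ℝ × ℝ) (hF : ∀ p, F p = (σ p, τ p))
    (hFb : Function.Bijective F)
    (hFinv : ∃ G : ℝ × ℝ → ℝ × ℝ, ContDiff ℝ 2 G ∧
      Function.LeftInverse G F ∧ Function.RightInverse G F)
    (ha : ∀ θ : ℝ × ℝ → ℝ, ContDiff ℝ 2 θ →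
      ((∀ p : ℝ × ℝ, pd2 (pd1 θ) p = 0) ↔ (∀ p : ℝ × ℝ, pd2 (pd1 (θ ∘ F)) p = 0)))
    (hb : ∀ p : ℝ × ℝ, pd1 σ p * pd2 τ p + pd2 σ p * pd1 τ p ≥ 0)
    (hc : ∀ p : ℝ × ℝ,
      (pd1 (fun q => σ q - τ q) p - pd2 (fun q => σ q - τ q) p) ≥ 0) :
    (∀ p q, causal p q ↔ causal (F p) (F q)) ∧
    ∃ φ ψ : ℝ → ℝ, (∃ eφ : ℝ ≃ₜ ℝ, ⇑eφ = φ) ∧ (∃ eψ : ℝ ≃ₜ ℝ, ⇑eψ = ψ) ∧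
      ((StrictMono φ ∧ StrictMono ψ ∧ ∀ p : ℝ × ℝ, F p = (φ p.1, ψ p.2)) ∨
       (StrictAnti φ ∧ StrictAnti ψ ∧ ∀ p : ℝ × ℝ, F p = (φ p.2, ψ p.1))) := by
  have hdσ : Differentiable ℝ σ := hσ.differentiable (by norm_num)
  have hdτ : Differentiable ℝ τ := hτ.differentiable (by norm_num)
  have injF : Function.Injective F := hFb.1
  -- wave equation facts transported by `ha`
  have W1 : ∀ p, pd2 (pd1 σ) p = 0 := by
    have h := (ha (fun q => q.1) contDiff_fst).1 aux_mix_fst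
    have e : (fun q : ℝ × ℝ => q.1) ∘ F = σ := funext fun p => by
      simp [Function.comp, hF p]
    rwa [e] at h
  have W2 : ∀ p, pd2 (pd1 τ) p = 0 := by
    have h := (ha (fun q => q.2) contDiff_snd).1 aux_mix_snd
    have e : (fun q : ℝ × ℝ => q.2) ∘ F = τ := funext fun p => by
      simp [Function.comp, hF p]
    rwa [e] at h
  have W3 : ∀ p, pd2 (pd1 (fun p => σ p ^ 2)) p = 0 := by
    have h := (ha (fun q => q.1 ^ 2) (contDiff_fst.pow 2)).1 aux_mix_fst_sq
    have e : (fun q : ℝ × ℝ => q.1 ^ 2) ∘ F = fun p => σ p ^ 2 := funext fun p => by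
      simp [Function.comp, hF p]
    rwa [e] at h
  have W4 : ∀ p, pd2 (pd1 (fun p => τ p ^ 2)) p = 0 := by
    have h := (ha (fun q => q.2 ^ 2) (contDiff_snd.pow 2)).1 aux_mix_snd_sq
    have e : (fun q : ℝ × ℝ => q.2 ^ 2) ∘ F = fun p => τ p ^ 2 := funext fun p => by
      simp [Function.comp, hF p]
    rwa [e] at h
  -- separation of variables
  have sepσ : ∀ u v, σ (u, v) = σ (u, 0) + σ (0, v) - σ (0, 0) := aux_separation hσ W1
  have sepτ : ∀ u v, τ (u, v) = τ (u, 0) + τ (0, v) - τ (0, 0) := aux_separation hτ W2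
  -- differentiability of the four slice functions
  have hA : Differentiable ℝ (fun u => σ (u, 0)) :=
    hdσ.comp (differentiable_id.prodMk (differentiable_const 0))
  have hB : Differentiable ℝ (fun v => σ (0, v)) :=
    hdσ.comp ((differentiable_const 0).prodMk differentiable_id)
  have hC : Differentiable ℝ (fun u => τ (u, 0)) :=
    hdτ.comp (differentiable_id.prodMk (differentiable_const 0))
  have hD : Differentiable ℝ (fun v => τ (0, v)) :=
    hdτ.comp ((differentiable_const 0).prodMk differentiable_id)
  -- products of slice derivatives vanish
  have P1 : ∀ u v, deriv (fun u => σ (u, 0)) u * deriv (fun v => σ (0, v)) v = 0 :=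
    aux_mix_sq hA hB sepσ W3
  have P2 : ∀ u v, deriv (fun u => τ (u, 0)) u * deriv (fun v => τ (0, v)) v = 0 :=
    aux_mix_sq hC hD sepτ W4
  -- conditions (b) and (c) in slice form
  have Phb : ∀ u v : ℝ, deriv (fun u => σ (u, 0)) u * deriv (fun v => τ (0, v)) v
      + deriv (fun v => σ (0, v)) v * deriv (fun u => τ (u, 0)) u ≥ 0 := by
    intro u v
    have h := hb (u, v)
    rwa [aux_pd1_sep sepσ u v, aux_pd2_sep sepσ u v, aux_pd1_sep sepτ u v,
      aux_pd2_sep sepτ u v] at h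
  have pdst1 : ∀ u v : ℝ, pd1 (fun q => σ q - τ q) (u, v) =
      deriv (fun u => σ (u, 0)) u - deriv (fun u => τ (u, 0)) u := by
    intro u v
    have e : (fun x => σ (x, v) - τ (x, v)) =
        fun x => (σ (x, 0) - τ (x, 0)) + ((σ (0, v) - σ (0, 0)) - (τ (0, v) - τ (0, 0))) := by
      funext x; rw [sepσ x v, sepτ x v]; ring
    show deriv (fun x => σ (x, v) - τ (x, v)) u = _
    rw [e, deriv_add_const, deriv_fun_sub (hA u) (hC u)]
  have pdst2 : ∀ u v : ℝ, pd2 (fun q => σ q - τ q) (u, v) =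
      deriv (fun v => σ (0, v)) v - deriv (fun v => τ (0, v)) v := by
    intro u v
    have e : (fun y => σ (u, y) - τ (u, y)) =
        fun y => ((σ (u, 0) - σ (0, 0)) - (τ (u, 0) - τ (0, 0))) + (σ (0, y) - τ (0, y)) := by
      funext y; rw [sepσ u y, sepτ u y]; ring
    show deriv (fun y => σ (u, y) - τ (u, y)) v = _
    rw [e, deriv_const_add, deriv_fun_sub (hB v) (hD v)]
  have Phc : ∀ u v : ℝ,
      (deriv (fun u => σ (u, 0)) u - deriv (fun u => τ (u, 0)) u)
        - (deriv (fun v => σ (0, v)) v - deriv (fun v => τ (0, v)) v) ≥ 0 := by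
    intro u v
    have h := hc (u, v)
    rwa [pdst1 u v, pdst2 u v] at h
  -- case analysis
  rcases aux_prod_cases P1 with hA0 | hB0 <;> rcases aux_prod_cases P2 with hC0 | hD0
  · -- A' ≡ 0 and C' ≡ 0 : contradiction with injectivity (σ, τ depend only on v)
    exfalso
    have hAc : ∀ u, σ (u, 0) = σ (0, 0) := fun u => is_const_of_deriv_eq_zero hA hA0 u 0
    have hCc : ∀ u, τ (u, 0) = τ (0, 0) := fun u => is_const_of_deriv_eq_zero hC hC0 u 0
    have hFF : F ((0 : ℝ), (0 : ℝ)) = F ((1 : ℝ), (0 : ℝ)) := by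
      rw [hF, hF, Prod.mk.injEq]
      exact ⟨(hAc 1).symm, (hCc 1).symm⟩
    have := congrArg Prod.fst (injF hFF)
    norm_num at this
  · -- decreasing case : A' ≡ 0 and D' ≡ 0
    have hAc : ∀ u, σ (u, 0) = σ (0, 0) := fun u => is_const_of_deriv_eq_zero hA hA0 u 0
    have hDc : ∀ v, τ (0, v) = τ (0, 0) := fun v => is_const_of_deriv_eq_zero hD hD0 v 0
    have formF : ∀ p : ℝ × ℝ, F p = (σ (0, p.2), τ (p.1, 0)) := by
      intro p
      rw [hF p]
      have e1 : σ p = σ (0, p.2) := by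
        have h := sepσ p.1 p.2
        rw [hAc p.1] at h
        simpa using h
      have e2 : τ p = τ (p.1, 0) := by
        have h := sepτ p.1 p.2
        rw [hDc p.2] at h
        simpa using h
      rw [e1, e2]
    have injB : Function.Injective (fun v => σ (0, v)) := by
      intro a b hab
      have hFF : F ((0 : ℝ), a) = F ((0 : ℝ), b) := by
        rw [hF, hF, Prod.mk.injEq]
        refine ⟨hab, ?_⟩
        rw [hDc a, hDc b]
      exact congrArg Prod.snd (injF hFF)
    have injC : Function.Injective (fun u => τ (u, 0)) := by
      intro a b hab
      have hFF : F (a, (0 : ℝ)) = F (b, (0 : ℝ)) := by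
        rw [hF, hF, Prod.mk.injEq]
        refine ⟨?_, hab⟩
        rw [hAc a, hAc b]
      exact congrArg Prod.fst (injF hFF)
    have contB : Continuous (fun v => σ (0, v)) :=
      hσ.continuous.comp (continuous_const.prodMk continuous_id)
    have contC : Continuous (fun u => τ (u, 0)) :=
      hτ.continuous.comp (continuous_id.prodMk continuous_const)
    have surjB : Function.Surjective (fun v => σ (0, v)) := by
      intro x
      obtain ⟨p, hp⟩ := hFb.2 (x, τ ((0 : ℝ), (0 : ℝ)))
      rw [formF p] at hp
      exact ⟨p.2, congrArg Prod.fst hp⟩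
    have surjC : Function.Surjective (fun u => τ (u, 0)) := by
      intro x
      obtain ⟨p, hp⟩ := hFb.2 (σ ((0 : ℝ), (0 : ℝ)), x)
      rw [formF p] at hp
      exact ⟨p.1, congrArg Prod.snd hp⟩
    rcases contB.strictMono_of_inj injB with mB | aB <;>
      rcases contC.strictMono_of_inj injC with mC | aC
    · -- both increasing : contradiction with (c)
      exfalso
      have hBge : ∀ v, 0 ≤ deriv (fun v => σ (0, v)) v :=
        aux_monotone_deriv_nonneg mB.monotone hB
      have hCge : ∀ u, 0 ≤ deriv (fun u => τ (u, 0)) u :=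
        aux_monotone_deriv_nonneg mC.monotone hC
      have hz : ∀ v, deriv (fun v => σ (0, v)) v = 0 := by
        intro v
        have h := Phc 0 v
        rw [hA0 0, hD0 v] at h
        have := hCge 0
        linarith [hBge v]
      exact aux_const_contra hB hz injB
    · -- B increasing, C decreasing : contradiction with (b)
      exfalso
      have hBge : ∀ v, 0 ≤ deriv (fun v => σ (0, v)) v :=
        aux_monotone_deriv_nonneg mB.monotone hB
      have hCle : ∀ u, deriv (fun u => τ (u, 0)) u ≤ 0 :=
        aux_antitone_deriv_nonpos aC.antitone hC
      have hprod : ∀ v u, deriv (fun v => σ (0, v)) v * deriv (fun u => τ (u, 0)) u = 0 := by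
        intro v u
        refine le_antisymm (mul_nonpos_iff.mpr (Or.inl ⟨hBge v, hCle u⟩)) ?_
        have h := Phb u v
        rw [hA0 u] at h
        simpa using h
      rcases aux_prod_cases hprod with h | h
      · exact aux_const_contra hB h injB
      · exact aux_const_contra hC h injC
    · -- B decreasing, C increasing : contradiction with (b)
      exfalso
      have hBle : ∀ v, deriv (fun v => σ (0, v)) v ≤ 0 :=
        aux_antitone_deriv_nonpos aB.antitone hB
      have hCge : ∀ u, 0 ≤ deriv (fun u => τ (u, 0)) u :=
        aux_monotone_deriv_nonneg mC.monotone hC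
      have hprod : ∀ v u, deriv (fun v => σ (0, v)) v * deriv (fun u => τ (u, 0)) u = 0 := by
        intro v u
        refine le_antisymm (mul_nonpos_iff.mpr (Or.inr ⟨hBle v, hCge u⟩)) ?_
        have h := Phb u v
        rw [hA0 u] at h
        simpa using h
      rcases aux_prod_cases hprod with h | h
      · exact aux_const_contra hB h injB
      · exact aux_const_contra hC h injC
    · -- both decreasing : the swapped causal automorphism
      refine ⟨?_, fun v => σ (0, v), fun u => τ (u, 0), aux_anti_homeo aB surjB,
        aux_anti_homeo aC surjC, Or.inr ⟨aB, aC, formF⟩⟩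
      intro p q
      rw [formF p, formF q]
      constructor
      · rintro ⟨h1, h2⟩
        exact ⟨aB.le_iff_ge.2 h2, aC.le_iff_ge.2 h1⟩
      · rintro ⟨h1, h2⟩
        exact ⟨aC.le_iff_ge.1 h2, aB.le_iff_ge.1 h1⟩
  · -- increasing case : B' ≡ 0 and C' ≡ 0
    have hBc : ∀ v, σ (0, v) = σ (0, 0) := fun v => is_const_of_deriv_eq_zero hB hB0 v 0
    have hCc : ∀ u, τ (u, 0) = τ (0, 0) := fun u => is_const_of_deriv_eq_zero hC hC0 u 0
    have formF : ∀ p : ℝ × ℝ, F p = (σ (p.1, 0), τ (0, p.2)) := by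
      intro p
      rw [hF p]
      have e1 : σ p = σ (p.1, 0) := by
        have h := sepσ p.1 p.2
        rw [hBc p.2] at h
        simpa using h
      have e2 : τ p = τ (0, p.2) := by
        have h := sepτ p.1 p.2
        rw [hCc p.1] at h
        simpa using h
      rw [e1, e2]
    have injA : Function.Injective (fun u => σ (u, 0)) := by
      intro a b hab
      have hFF : F (a, (0 : ℝ)) = F (b, (0 : ℝ)) := by
        rw [hF, hF, Prod.mk.injEq]
        refine ⟨hab, ?_⟩
        rw [hCc a, hCc b]
      exact congrArg Prod.fst (injF hFF)
    have injD : Function.Injective (fun v => τ (0, v)) := by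
      intro a b hab
      have hFF : F ((0 : ℝ), a) = F ((0 : ℝ), b) := by
        rw [hF, hF, Prod.mk.injEq]
        refine ⟨?_, hab⟩
        rw [hBc a, hBc b]
      exact congrArg Prod.snd (injF hFF)
    have contA : Continuous (fun u => σ (u, 0)) :=
      hσ.continuous.comp (continuous_id.prodMk continuous_const)
    have contD : Continuous (fun v => τ (0, v)) :=
      hτ.continuous.comp (continuous_const.prodMk continuous_id)
    have surjA : Function.Surjective (fun u => σ (u, 0)) := by
      intro x
      obtain ⟨p, hp⟩ := hFb.2 (x, τ ((0 : ℝ), (0 : ℝ)))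
      rw [formF p] at hp
      exact ⟨p.1, congrArg Prod.fst hp⟩
    have surjD : Function.Surjective (fun v => τ (0, v)) := by
      intro x
      obtain ⟨p, hp⟩ := hFb.2 (σ ((0 : ℝ), (0 : ℝ)), x)
      rw [formF p] at hp
      exact ⟨p.2, congrArg Prod.snd hp⟩
    rcases contA.strictMono_of_inj injA with mA | aA <;>
      rcases contD.strictMono_of_inj injD with mD | aD
    · -- both increasing : the straight causal automorphism
      refine ⟨?_, fun u => σ (u, 0), fun v => τ (0, v), aux_mono_homeo mA surjA,
        aux_mono_homeo mD surjD, Or.inl ⟨mA, mD, formF⟩⟩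
      intro p q
      rw [formF p, formF q]
      constructor
      · rintro ⟨h1, h2⟩
        exact ⟨mA.le_iff_le.2 h1, mD.le_iff_le.2 h2⟩
      · rintro ⟨h1, h2⟩
        exact ⟨mA.le_iff_le.1 h1, mD.le_iff_le.1 h2⟩
    · -- A increasing, D decreasing : contradiction with (b)
      exfalso
      have hAge : ∀ u, 0 ≤ deriv (fun u => σ (u, 0)) u :=
        aux_monotone_deriv_nonneg mA.monotone hA
      have hDle : ∀ v, deriv (fun v => τ (0, v)) v ≤ 0 :=
        aux_antitone_deriv_nonpos aD.antitone hD
      have hprod : ∀ u v, deriv (fun u => σ (u, 0)) u * deriv (fun v => τ (0, v)) v = 0 := by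
        intro u v
        refine le_antisymm (mul_nonpos_iff.mpr (Or.inl ⟨hAge u, hDle v⟩)) ?_
        have h := Phb u v
        rw [hB0 v] at h
        simpa using h
      rcases aux_prod_cases hprod with h | h
      · exact aux_const_contra hA h injA
      · exact aux_const_contra hD h injD
    · -- A decreasing, D increasing : contradiction with (b)
      exfalso
      have hAle : ∀ u, deriv (fun u => σ (u, 0)) u ≤ 0 :=
        aux_antitone_deriv_nonpos aA.antitone hA
      have hDge : ∀ v, 0 ≤ deriv (fun v => τ (0, v)) v :=
        aux_monotone_deriv_nonneg mD.monotone hD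
      have hprod : ∀ u v, deriv (fun u => σ (u, 0)) u * deriv (fun v => τ (0, v)) v = 0 := by
        intro u v
        refine le_antisymm (mul_nonpos_iff.mpr (Or.inr ⟨hAle u, hDge v⟩)) ?_
        have h := Phb u v
        rw [hB0 v] at h
        simpa using h
      rcases aux_prod_cases hprod with h | h
      · exact aux_const_contra hA h injA
      · exact aux_const_contra hD h injD
    · -- both decreasing : contradiction with (c)
      exfalso
      have hAle : ∀ u, deriv (fun u => σ (u, 0)) u ≤ 0 :=
        aux_antitone_deriv_nonpos aA.antitone hA
      have hDle : ∀ v, deriv (fun v => τ (0, v)) v ≤ 0 :=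
        aux_antitone_deriv_nonpos aD.antitone hD
      have hz : ∀ u, deriv (fun u => σ (u, 0)) u = 0 := by
        intro u
        have h := Phc u 0
        rw [hC0 u, hB0 0] at h
        have := hDle 0
        linarith [hAle u]
      exact aux_const_contra hA hz injA
  · -- B' ≡ 0 and D' ≡ 0 : contradiction with injectivity (σ, τ depend only on u)
    exfalso
    have hBc : ∀ v, σ (0, v) = σ (0, 0) := fun v => is_const_of_deriv_eq_zero hB hB0 v 0
    have hDc : ∀ v, τ (0, v) = τ (0, 0) := fun v => is_const_of_deriv_eq_zero hD hD0 v 0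
    have e1 : ∀ p : ℝ × ℝ, σ p = σ (p.1, 0) := by
      intro p
      have h := sepσ p.1 p.2
      rw [hBc p.2] at h
      simpa using h
    have e2 : ∀ p : ℝ × ℝ, τ p = τ (p.1, 0) := by
      intro p
      have h := sepτ p.1 p.2
      rw [hDc p.2] at h
      simpa using h
    have hFF : F ((0 : ℝ), (0 : ℝ)) = F ((0 : ℝ), (1 : ℝ)) := by
      rw [hF, hF, Prod.mk.injEq]
      constructor
      · rw [e1 ((0 : ℝ), (1 : ℝ))]
      · rw [e2 ((0 : ℝ), (1 : ℝ))]
    have := congrArg Prod.snd (injF hFF)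
    norm_num at this
end
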